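/- Let U_Z, U_X, U_Y be independent real random variables on a probability space (Ω, ℙ), each with distribution gaussianReal 0 1, and set Y = 2·U_Z + U_X + U_Y (corresponding to the SCM Z = U_Z, X = Z + U_X, Y = X + Z + U_Y). Define the counterfactual outcome W = −1 + U_Z + U_Y (the value of Y in the submodel obtained by the intervention do(X = −1)). Then for (law of Y)-almost every y ∈ ℝ, the regular conditional distribution of W given Y = y is condDistrib W Y ℙ (y) = gaussianReal (−1 + y/2) (1/2). In particular, the counterfactual distribution of Y_{do(X = −1)} given the evidence Y = 1 is the normal distribution N(−1/2, 1/2). -/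

import Mathlib

open MeasureTheory ProbabilityTheory Real
open scoped ENNReal NNReal

section CFAux

lemma lintegral_scale_shift (h : ℝ → ℝ≥0∞) (hh : Measurable h) (x : ℝ) :
    ENNReal.ofReal 2 * ∫⁻ u, h (2 * u + x) = ∫⁻ y, h y := by
  have htrans : ∫⁻ y, h (y + x) ∂volume = ∫⁻ y, h y ∂volume :=
    (measurePreserving_add_right volume x).lintegral_comp hh
  have h1 : ∫⁻ u, h (2 * u + x) ∂volume
      = ENNReal.ofReal |(2:ℝ)⁻¹| * ∫⁻ y, h (y + x) ∂volume := by
    have h2 := lintegral_map (μ := (volume : Measure ℝ))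
      (f := fun y : ℝ => h (y + x)) (hh.comp (measurable_add_const x))
      (measurable_const_mul (2:ℝ))
    rw [Real.map_volume_mul_left two_ne_zero, lintegral_smul_measure] at h2
    exact h2.symm
  rw [h1, ← mul_assoc, ← ENNReal.ofReal_mul (by norm_num), htrans]
  norm_num [abs_of_pos]

lemma lintegral_translate (h : ℝ → ℝ≥0∞) (hh : Measurable h) (x : ℝ) :
    ∫⁻ y, h (y + x) = ∫⁻ y, h y :=
  (measurePreserving_add_right volume x).lintegral_comp hh

lemma prod_withDensity_apply (d₁ d₂ : ℝ → ℝ≥0∞) (h₁ : Measurable d₁) (h₂ : Measurable d₂)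
    {A : Set (ℝ × ℝ)} (hA : MeasurableSet A) :
    ((volume.withDensity d₁).prod (volume.withDensity d₂)) A
      = ∫⁻ x, d₁ x * ∫⁻ y, d₂ y * A.indicator 1 (x, y) := by
  have hinner : ∀ x, (volume.withDensity d₂) (Prod.mk x ⁻¹' A)
      = ∫⁻ y, d₂ y * A.indicator 1 (x, y) := by
    intro x
    rw [withDensity_apply _ (measurable_prodMk_left hA),
      ← lintegral_indicator (measurable_prodMk_left hA)]
    refine lintegral_congr fun y => ?_
    by_cases hy : (x, y) ∈ A <;> simp [Set.indicator_apply, hy]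
  rw [Measure.prod_apply hA,
    lintegral_withDensity_eq_lintegral_mul _ h₁ (measurable_measure_prodMk_left hA)]
  exact lintegral_congr fun x => by rw [Pi.mul_apply, hinner x]

lemma pdf_real_identity (u b : ℝ) :
    2 * (gaussianPDFReal 0 1 (b + -u) * gaussianPDFReal 0 1 (2 * u + (b + -u)))
      = gaussianPDFReal 0 (1/2) u * gaussianPDFReal 0 (1/2) b := by
  simp only [gaussianPDFReal]
  push_cast
  rw [show 2 * π * (1:ℝ) = 2 * π by ring, show 2 * π * (1/2 : ℝ) = π by ring]
  have hπ : (0:ℝ) < π := pi_pos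
  have hexp : rexp (-(b + -u) ^ 2 / 2) * rexp (-(2 * u + (b + -u)) ^ 2 / 2)
      = rexp (-u ^ 2) * rexp (-b ^ 2) := by
    rw [← Real.exp_add, ← Real.exp_add]
    congr 1
    ring
  have h3 : Real.sqrt 2 * Real.sqrt π * (Real.sqrt 2 * Real.sqrt π) = 2 * π := by
    have a1 : Real.sqrt 2 * Real.sqrt 2 = 2 := Real.mul_self_sqrt (by norm_num)
    have a2 : Real.sqrt π * Real.sqrt π = π := Real.mul_self_sqrt hπ.le
    nlinarith [a1, a2]
  field_simp
  rw [Real.sq_sqrt hπ.le, Real.sq_sqrt (by positivity)]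
  simp only [sub_zero, neg_div] at hexp ⊢
  linear_combination (2 * π) * hexp

lemma pdf_identity (u b : ℝ) :
    ENNReal.ofReal 2 * (gaussianPDF 0 1 (b + -u) * gaussianPDF 0 1 (2 * u + (b + -u)))
      = gaussianPDF 0 (1/2) u * gaussianPDF 0 (1/2) b := by
  simp only [gaussianPDF]
  rw [← ENNReal.ofReal_mul (gaussianPDFReal_nonneg _ _ _),
    ← ENNReal.ofReal_mul (by norm_num),
    ← ENNReal.ofReal_mul (gaussianPDFReal_nonneg _ _ _)]
  rw [pdf_real_identity]

lemma map_R :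
    ((gaussianReal 0 1).prod (gaussianReal 0 1)).map
        (fun p : ℝ × ℝ => ((p.2 - p.1) / 2, (p.1 + p.2) / 2))
      = (gaussianReal 0 (1/2)).prod (gaussianReal 0 (1/2)) := by
  have hhalf : ((1:ℝ≥0)/2) ≠ 0 := by norm_num
  have hR : Measurable fun p : ℝ × ℝ => ((p.2 - p.1) / 2, (p.1 + p.2) / 2) := by fun_prop
  set d : ℝ → ℝ≥0∞ := gaussianPDF 0 1 with hd
  set e : ℝ → ℝ≥0∞ := gaussianPDF 0 (1/2) with he
  have hdm : Measurable d := measurable_gaussianPDF _ _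
  have hem : Measurable e := measurable_gaussianPDF _ _
  have hd_ne : ∀ x, d x ≠ ⊤ := fun x => by simp [hd, gaussianPDF]
  have h2ne : (ENNReal.ofReal 2) ≠ ⊤ := ENNReal.ofReal_ne_top
  ext s hs
  set ind : ℝ × ℝ → ℝ≥0∞ := s.indicator 1 with hind
  have hindm : Measurable ind := measurable_one.indicator hs
  rw [Measure.map_apply hR hs]
  rw [gaussianReal_of_var_ne_zero 0 one_ne_zero, gaussianReal_of_var_ne_zero 0 hhalf]
  rw [prod_withDensity_apply _ _ hdm hdm (hR hs), prod_withDensity_apply _ _ hem hem hs]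
  have hpre : ∀ p : ℝ × ℝ, (((fun p : ℝ × ℝ => ((p.2 - p.1) / 2, (p.1 + p.2) / 2)) ⁻¹' s).indicator
      (1 : ℝ × ℝ → ℝ≥0∞)) p = ind ((p.2 - p.1) / 2, (p.1 + p.2) / 2) := by
    intro p
    by_cases hp : ((p.2 - p.1) / 2, (p.1 + p.2) / 2) ∈ s <;>
      simp [Set.indicator_apply, hp, hind]
  simp only [hpre]
  calc
    ∫⁻ x, d x * ∫⁻ y, d y * ind ((y - x) / 2, (x + y) / 2)
        = ∫⁻ x, ENNReal.ofReal 2 * ∫⁻ u, d x * (d (2 * u + x) * ind (u, x + u)) := by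
          refine lintegral_congr fun x => ?_
          have hmeas : Measurable fun y => d y * ind ((y - x) / 2, (x + y) / 2) := by fun_prop
          have hss := lintegral_scale_shift (fun y => d y * ind ((y - x) / 2, (x + y) / 2)) hmeas x
          rw [← hss]
          have harg : ∀ u : ℝ, d (2 * u + x) * ind ((2 * u + x - x) / 2, (x + (2 * u + x)) / 2)
              = d (2 * u + x) * ind (u, x + u) := by
            intro u
            rw [show (2 * u + x - x) / 2 = u by ring, show (x + (2 * u + x)) / 2 = x + u by ring]
          simp only [harg]
          rw [lintegral_const_mul' (d x) _ (hd_ne x)]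
          ring
      _ = ENNReal.ofReal 2 * ∫⁻ u, ∫⁻ x, d x * (d (2 * u + x) * ind (u, x + u)) := by
          rw [lintegral_const_mul' _ _ h2ne]
          congr 1
          refine lintegral_lintegral_swap ?_
          apply Measurable.aemeasurable
          fun_prop
      _ = ∫⁻ u, ∫⁻ b, e u * (e b * ind (u, b)) := by
          rw [← lintegral_const_mul' _ _ h2ne]
          refine lintegral_congr fun u => ?_
          have hmeas : Measurable fun x => d x * (d (2 * u + x) * ind (u, x + u)) := by fun_prop
          rw [← lintegral_translate _ hmeas (-u), ← lintegral_const_mul' _ _ h2ne]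
          refine lintegral_congr fun b => ?_
          rw [show b + -u + u = b by ring]
          calc ENNReal.ofReal 2 * (d (b + -u) * (d (2 * u + (b + -u)) * ind (u, b)))
              = (ENNReal.ofReal 2 * (d (b + -u) * d (2 * u + (b + -u)))) * ind (u, b) := by ring
            _ = (e u * e b) * ind (u, b) := by rw [pdf_identity]
            _ = e u * (e b * ind (u, b)) := by ring
      _ = ∫⁻ x, e x * ∫⁻ y, e y * ind (x, y) := by
          refine lintegral_congr fun u => ?_
          rw [lintegral_const_mul _ (by fun_prop)]

lemma gaussian_shift (c : ℝ) :
    (gaussianReal 0 (1/2)).map (fun v => c + v) = gaussianReal c (1/2) := by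
  have := gaussianReal_map_const_add (μ := 0) (v := (1/2 : ℝ≥0)) c
  simpa using this

noncomputable def κCF : Kernel ℝ ℝ where
  toFun := fun y => gaussianReal (-1 + y / 2) (1 / 2)
  measurable' := by
    apply Measure.measurable_of_measurable_coe
    intro s hs
    have h1 : ∀ y : ℝ, gaussianReal (-1 + y / 2) (1/2 : ℝ≥0) s
        = ∫⁻ v, s.indicator 1 ((-1 + y / 2) + v) ∂(gaussianReal 0 (1/2)) := by
      intro y
      rw [← gaussian_shift (-1 + y / 2), Measure.map_apply (measurable_const_add _) hs,
        ← lintegral_indicator_one ((measurable_const_add _) hs)]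
      refine lintegral_congr fun v => ?_
      by_cases hv : (-1 + y / 2) + v ∈ s <;> simp [Set.indicator_apply, hv]
    simp only [h1]
    apply Measurable.lintegral_prod_right
    have : Measurable (s.indicator (1 : ℝ → ℝ≥0∞)) := measurable_one.indicator hs
    fun_prop

instance : IsMarkovKernel κCF := ⟨fun _ => by
  show IsProbabilityMeasure (gaussianReal _ _); infer_instance⟩

lemma κCF_apply (y : ℝ) : κCF y = gaussianReal (-1 + y / 2) (1 / 2) := rfl

lemma compProd_κCF (μ : Measure ℝ) [SFinite μ] :
    μ ⊗ₘ κCF = (μ.prod (gaussianReal 0 (1/2))).map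
      (fun p : ℝ × ℝ => (p.1, -1 + p.1 / 2 + p.2)) := by
  have hΦ : Measurable fun p : ℝ × ℝ => (p.1, -1 + p.1 / 2 + p.2) := by fun_prop
  ext s hs
  rw [Measure.compProd_apply hs, Measure.map_apply hΦ hs, Measure.prod_apply (hΦ hs)]
  refine lintegral_congr fun y => ?_
  rw [κCF_apply, ← gaussian_shift (-1 + y / 2),
    Measure.map_apply (measurable_const_add _) (measurable_prodMk_left hs)]
  rfl

lemma perm_prod (μ ν ρ : Measure ℝ) [SFinite μ] [SFinite ν] [SFinite ρ] :
    (μ.prod (ν.prod ρ)).map (fun p : ℝ × ℝ × ℝ => (p.2.1, (p.1, p.2.2)))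
      = ν.prod (μ.prod ρ) := by
  have h1 := (MeasureTheory.measurePreserving_prodAssoc μ ν ρ).symm
  have h2 : MeasurePreserving (Prod.map (Prod.swap : ℝ × ℝ → ℝ × ℝ) (id : ℝ → ℝ))
      ((μ.prod ν).prod ρ) ((ν.prod μ).prod ρ) :=
    (Measure.measurePreserving_swap).prod (MeasurePreserving.id ρ)
  have h3 := MeasureTheory.measurePreserving_prodAssoc ν μ ρ
  have h := (h3.comp (h2.comp h1)).map_eq
  have hfun : (MeasurableEquiv.prodAssoc ∘ (Prod.map Prod.swap id) ∘
      (MeasurableEquiv.prodAssoc : (ℝ × ℝ) × ℝ ≃ᵐ ℝ × ℝ × ℝ).symm)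
      = fun p : ℝ × ℝ × ℝ => (p.2.1, (p.1, p.2.2)) := by
    funext p
    rfl
  rw [hfun] at h
  exact h

end CFAux

/-- **Conclusion of the worked counterfactual computation (Online Appendix 1).**
In the linear Gaussian SCM `Z = U_Z`, `X = Z + U_X`, `Y = X + Z + U_Y` with
`U_Z, U_X, U_Y` i.i.d. `N(0,1)` (so `Y = 2·U_Z + U_X + U_Y`), the counterfactual outcome
`W = −1 + U_Z + U_Y` (the value of `Y` under the intervention `do(X = −1)`) satisfies,
for `(law of Y)`-almost every `y`,
`condDistrib W Y P y = gaussianReal (−1 + y/2) (1/2)`;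
in particular `Y_{do(X=−1)} | (Y = 1) ∼ N(−1/2, 1/2)`. -/
theorem condDistrib_counterfactual_outcome_gaussian
    {Ω : Type*} [MeasurableSpace Ω] (P : Measure Ω) [IsProbabilityMeasure P]
    (UZ UX UY : Ω → ℝ)
    (hUZ : Measurable UZ) (hUX : Measurable UX) (hUY : Measurable UY)
    (hindep : iIndepFun ![UZ, UX, UY] P)
    (hUZ_law : P.map UZ = gaussianReal 0 1)
    (hUX_law : P.map UX = gaussianReal 0 1)
    (hUY_law : P.map UY = gaussianReal 0 1)
    (Y : Ω → ℝ) (hY : Y = fun ω => 2 * UZ ω + UX ω + UY ω)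
    (W : Ω → ℝ) (hW : W = fun ω => -1 + UZ ω + UY ω) :
    ∀ᵐ y ∂(P.map Y),
      condDistrib W Y P y = gaussianReal (-1 + y / 2) (1 / 2) := by
  have hYm : Measurable Y := by subst hY; fun_prop
  have hWm : Measurable W := by subst hW; fun_prop
  set g1 : Measure ℝ := gaussianReal 0 1 with hg1
  set g2 : Measure ℝ := gaussianReal 0 (1/2) with hg2
  set V : Ω → ℝ := fun ω => (UY ω - UX ω) / 2 with hVdef
  set B : Ω → ℝ := fun ω => (UX ω + UY ω) / 2 with hBdef
  have hVm : Measurable V := by fun_prop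
  have hBm : Measurable B := by fun_prop
  have hmeas : ∀ i, Measurable (![UZ, UX, UY] i) := by
    intro i; fin_cases i <;> simpa
  -- independence of UX and UY
  have hXY : IndepFun UX UY P := by
    have := hindep.indepFun (i := 1) (j := 2) (by decide)
    simpa using this
  have hmapXY : P.map (fun ω => (UX ω, UY ω)) = g1.prod g1 := by
    rw [(indepFun_iff_map_prod_eq_prod_map_map hUX.aemeasurable hUY.aemeasurable).mp hXY,
      hUX_law, hUY_law]
  -- joint law of (V, B)
  have hR : Measurable fun p : ℝ × ℝ => ((p.2 - p.1) / 2, (p.1 + p.2) / 2) := by fun_prop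
  have hmapVB : P.map (fun ω => (V ω, B ω)) = g2.prod g2 := by
    have hcomp : (fun ω => (V ω, B ω))
        = (fun p : ℝ × ℝ => ((p.2 - p.1) / 2, (p.1 + p.2) / 2)) ∘ (fun ω => (UX ω, UY ω)) := rfl
    rw [hcomp, ← Measure.map_map hR (hUX.prodMk hUY), hmapXY, hg1, hg2, map_R]
  have hV_law : P.map V = g2 := by
    have : V = Prod.fst ∘ (fun ω => (V ω, B ω)) := rfl
    rw [this, ← Measure.map_map measurable_fst (hVm.prodMk hBm), hmapVB]
    simp
  have hB_law : P.map B = g2 := by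
    have : B = Prod.snd ∘ (fun ω => (V ω, B ω)) := rfl
    rw [this, ← Measure.map_map measurable_snd (hVm.prodMk hBm), hmapVB]
    simp
  -- independence of (UX, UY) and UZ
  have hpairZ : IndepFun (fun ω => (UX ω, UY ω)) UZ P := by
    have := hindep.indepFun_prodMk hmeas 1 2 0 (by decide) (by decide)
    simpa using this
  have hVBZ : IndepFun (fun ω => (V ω, B ω)) UZ P := by
    have := hpairZ.comp hR measurable_id
    exact this
  have hBZ : IndepFun UZ B P := by
    have := (hpairZ.comp (by fun_prop : Measurable fun p : ℝ × ℝ => (p.1 + p.2) / 2)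
      measurable_id).symm
    exact this
  have hmapZB : P.map (fun ω => (UZ ω, B ω)) = g1.prod g2 := by
    rw [(indepFun_iff_map_prod_eq_prod_map_map hUZ.aemeasurable hBm.aemeasurable).mp hBZ,
      hUZ_law, hB_law]
  -- triple law and permutation
  have hmap_triple : P.map (fun ω => (UZ ω, (V ω, B ω))) = g1.prod (g2.prod g2) := by
    rw [(indepFun_iff_map_prod_eq_prod_map_map hUZ.aemeasurable
      (hVm.prodMk hBm).aemeasurable).mp hVBZ.symm, hUZ_law, hmapVB]
  have hmapVZB : P.map (fun ω => (V ω, (UZ ω, B ω))) = g2.prod (g1.prod g2) := by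
    have hcomp : (fun ω => (V ω, (UZ ω, B ω)))
        = (fun p : ℝ × ℝ × ℝ => (p.2.1, (p.1, p.2.2))) ∘ (fun ω => (UZ ω, (V ω, B ω))) := rfl
    rw [hcomp, ← Measure.map_map (by fun_prop) (hUZ.prodMk (hVm.prodMk hBm)), hmap_triple,
      perm_prod]
  have hV_ZB : IndepFun V (fun ω => (UZ ω, B ω)) P := by
    refine (indepFun_iff_map_prod_eq_prod_map_map hVm.aemeasurable
      (hUZ.prodMk hBm).aemeasurable).mpr ?_
    rw [hmapVZB, hV_law, hmapZB]
  -- independence of V and Y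
  have hVY : IndepFun V Y P := by
    have h := hV_ZB.comp measurable_id
      (by fun_prop : Measurable fun p : ℝ × ℝ => 2 * p.1 + 2 * p.2)
    have hYeq : (fun p : ℝ × ℝ => 2 * p.1 + 2 * p.2) ∘ (fun ω => (UZ ω, B ω)) = Y := by
      subst hY; funext ω; show 2 * UZ ω + 2 * ((UX ω + UY ω) / 2) = _; ring
    rwa [hYeq] at h
  have hmapYV : P.map (fun ω => (Y ω, V ω)) = (P.map Y).prod g2 := by
    rw [(indepFun_iff_map_prod_eq_prod_map_map hYm.aemeasurable hVm.aemeasurable).mp hVY.symm,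
      hV_law]
  -- identify joint law of (Y, W)
  have hΦ : Measurable fun p : ℝ × ℝ => (p.1, -1 + p.1 / 2 + p.2) := by fun_prop
  have hYW : (fun ω => (Y ω, W ω))
      = (fun p : ℝ × ℝ => (p.1, -1 + p.1 / 2 + p.2)) ∘ (fun ω => (Y ω, V ω)) := by
    subst hY hW; funext ω
    refine Prod.ext rfl ?_
    show -1 + UZ ω + UY ω = -1 + (2 * UZ ω + UX ω + UY ω) / 2 + (UY ω - UX ω) / 2
    ring
  have hmain : P.map (fun ω => (Y ω, W ω)) = (P.map Y) ⊗ₘ κCF := by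
    rw [hYW, ← Measure.map_map hΦ (hYm.prodMk hVm), hmapYV, compProd_κCF]
  have h := condDistrib_ae_eq_of_measure_eq_compProd_of_measurable hYm hWm (κ := κCF) hmain
  filter_upwards [h] with y hy
  rw [hy, κCF_apply]
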